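/- For the linear-fractional probability generating function f(s) = p0 + (1-p0)·ps/(1 - (1-p)s) with p ∈ (0,1], p0 ∈ [0,1], the iterated tail generating function satisfies ∇_{a_1}⋯∇_{a_n} f(s) = (p(1-p0)/(1-p)) · Π_{i=1}^n [(1-p)/(1-(1-p)a_i)] · 1/(1-(1-p)s) for all admissible a_1,...,a_n, s with (1-p)a_i ≠ 1 and (1-p)s ≠ 1. -/

import Mathlib

/-- The tail generating function operator: `∇_a v(s) = (v(s) - v(a))/(s - a)` for `s ≠ a`,
extended by `∇_a v(a) = v'(a)`. -/
noncomputable def nabla (a : ℝ) (v : ℝ → ℝ) : ℝ → ℝ :=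
  fun s => if s = a then deriv v a else (v s - v a) / (s - a)

/-- Iterated tail generating operator `∇_{a_1} ⋯ ∇_{a_n} v` for the list `[a_1, …, a_n]`
(the head of the list is the outermost operator). -/
noncomputable def nablaChain (l : List ℝ) (v : ℝ → ℝ) : ℝ → ℝ :=
  l.foldr nabla v

private lemma nabla_step (q C D a : ℝ) (ha : q * a ≠ 1) (v : ℝ → ℝ)
    (hv : ∀ t, q * t ≠ 1 → v t = D + C / (1 - q * t)) :
    ∀ t, q * t ≠ 1 → nabla a v t = (C * q / (1 - q * a)) / (1 - q * t) := by
  have ha' : 1 - q * a ≠ 0 := sub_ne_zero.mpr (Ne.symm ha)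
  intro t ht
  have ht' : 1 - q * t ≠ 0 := sub_ne_zero.mpr (Ne.symm ht)
  unfold nabla
  by_cases h : t = a
  · subst h
    rw [if_pos rfl]
    -- deriv v t = deriv of the rational function
    have hopen : IsOpen {x : ℝ | q * x ≠ 1} := by
      have : Continuous fun x : ℝ => q * x := by continuity
      exact (isOpen_ne_fun (by continuity) continuous_const)
    have hmem : {x : ℝ | q * x ≠ 1} ∈ nhds t := hopen.mem_nhds ht
    have heq : v =ᶠ[nhds t] fun x => D + C / (1 - q * x) :=
      Filter.eventuallyEq_of_mem hmem (fun x hx => hv x hx)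
    have hd : HasDerivAt (fun x : ℝ => D + C / (1 - q * x))
        (C * (q / (1 - q * t) ^ 2)) t := by
      have h1 : HasDerivAt (fun x : ℝ => 1 - q * x) (-(q * 1)) t :=
        ((hasDerivAt_id t).const_mul q).const_sub 1
      have h2 := (h1.inv ht').const_mul C
      have h3 := h2.const_add D
      have h4 : (fun x : ℝ => D + C / (1 - q * x)) = fun x => D + C * (fun x => 1 - q * x)⁻¹ x := by
        funext x; simp [div_eq_mul_inv]
      rw [h4]
      exact h3.congr_deriv (by ring)
    have : deriv v t = C * (q / (1 - q * t) ^ 2) := by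
      rw [heq.deriv_eq, hd.deriv]
    rw [this, div_div]
    ring
  · simp only [if_neg h]
    rw [hv t ht, hv a ha]
    have hta : t - a ≠ 0 := sub_ne_zero.mpr h
    field_simp
    ring

private lemma nabla_chain_aux (q C D : ℝ) (l : List ℝ) (hl : l ≠ [])
    (hal : ∀ a ∈ l, q * a ≠ 1) (v : ℝ → ℝ)
    (hv : ∀ t, q * t ≠ 1 → v t = D + C / (1 - q * t)) :
    ∀ t, q * t ≠ 1 →
      nablaChain l v t = C * (l.map fun a => q / (1 - q * a)).prod / (1 - q * t) := by
  induction l generalizing C D with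
  | nil => exact absurd rfl hl
  | cons a l' ih =>
    have ha : q * a ≠ 1 := hal a (List.mem_cons_self)
    intro t ht
    rcases eq_or_ne l' [] with h' | h'
    · subst h'
      have := nabla_step q C D a ha v hv t ht
      have hchain : nablaChain [a] v = nabla a v := rfl
      rw [hchain, this]
      simp
      ring
    · have hv' : ∀ t, q * t ≠ 1 →
          nablaChain l' v t = 0 + (C * (l'.map fun a => q / (1 - q * a)).prod) / (1 - q * t) := by
        intro t ht
        rw [zero_add]
        exact ih C D h' (fun a ha => hal a (List.mem_cons_of_mem _ ha)) hv t ht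
      have hstep := nabla_step q (C * (l'.map fun a => q / (1 - q * a)).prod) 0 a ha
        (nablaChain l' v) hv' t ht
      have hchain : nablaChain (a :: l') v = nabla a (nablaChain l' v) := rfl
      rw [hchain, hstep]
      simp only [List.map_cons, List.prod_cons]
      ring

/-- For the linear-fractional generating function
`f(s) = p0 + (1-p0) p s/(1-(1-p)s)`, the iterated tail generating functions are again
linear-fractional:
`∇_{a_1}⋯∇_{a_n} f(s) = (p(1-p0)/(1-p)) ∏_i (1-p)/(1-(1-p)a_i) · 1/(1-(1-p)s)`. -/
theorem linear_fractional_nabla_chain (p p0 : ℝ)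
    (hp : p ∈ Set.Ioo (0 : ℝ) 1) (hp0 : p0 ∈ Set.Icc (0 : ℝ) 1)
    (f : ℝ → ℝ) (hf : ∀ s, f s = p0 + (1 - p0) * (p * s / (1 - (1 - p) * s)))
    (l : List ℝ) (hl : l ≠ [])
    (hal : ∀ a ∈ l, (1 - p) * a ≠ 1) (s : ℝ) (hs : (1 - p) * s ≠ 1) :
    nablaChain l f s =
      (p * (1 - p0) / (1 - p)) *
        (l.map fun a => (1 - p) / (1 - (1 - p) * a)).prod *
        (1 / (1 - (1 - p) * s)) := by
  obtain ⟨hp1, hp2⟩ := hp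
  have hq : (1 - p) ≠ 0 := sub_ne_zero.mpr (Ne.symm (ne_of_lt hp2))
  set q := 1 - p with hqdef
  have hC : ∀ t, q * t ≠ 1 →
      f t = (p0 - (1 - p0) * p / q) + ((1 - p0) * p / q) / (1 - q * t) := by
    intro t ht
    have ht' : 1 - q * t ≠ 0 := sub_ne_zero.mpr (Ne.symm ht)
    rw [hf t]
    have ht'' : 1 - t * q ≠ 0 := by rwa [mul_comm t q]
    field_simp
    ring
  have := nabla_chain_aux q ((1 - p0) * p / q) (p0 - (1 - p0) * p / q) l hl hal f hC s hs
  rw [this]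
  have hprod : (l.map fun a => (1 - p) / (1 - (1 - p) * a)) =
      (l.map fun a => q / (1 - q * a)) := rfl
  rw [hprod]
  ring
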